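/- Positive definiteness of the Riccati innovation matrices (Lemma 3.4(i)): Assume SOSC. Then for every k = 0,…,N−1 the matrix W_k = R_k + B_kᵀK_{k+1}B_k appearing in the Riccati recursion is symmetric positive definite. -/

import Mathlib

open Matrix BigOperators Finset

/-- Homogeneous feasibility: `p_0 = 0` and `p_{k+1} = A_k p_k + B_k q_k` for `k < N`. -/
def HomFeas {nx nu : ℕ} (N : ℕ)
    (A : ℕ → Matrix (Fin nx) (Fin nx) ℝ) (B : ℕ → Matrix (Fin nx) (Fin nu) ℝ)
    (p : ℕ → Fin nx → ℝ) (q : ℕ → Fin nu → ℝ) : Prop :=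
  p 0 = 0 ∧ ∀ k < N, p (k + 1) = A k *ᵥ p k + B k *ᵥ q k

/-- The homogeneous quadratic objective
`Σ_{k<N} (p_kᵀQ_kp_k + 2q_kᵀS_kp_k + q_kᵀR_kq_k) + p_NᵀQ_Np_N`. -/
noncomputable def homObj {nx nu : ℕ} (N : ℕ)
    (Q : ℕ → Matrix (Fin nx) (Fin nx) ℝ) (R : ℕ → Matrix (Fin nu) (Fin nu) ℝ)
    (S : ℕ → Matrix (Fin nu) (Fin nx) ℝ)
    (p : ℕ → Fin nx → ℝ) (q : ℕ → Fin nu → ℝ) : ℝ :=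
  (∑ k ∈ range N,
      (p k ⬝ᵥ Q k *ᵥ p k + 2 * (q k ⬝ᵥ S k *ᵥ p k) + q k ⬝ᵥ R k *ᵥ q k))
    + p N ⬝ᵥ Q N *ᵥ p N

/-- SOSC: the homogeneous objective is positive on every nonzero feasible trajectory. -/
def SOSC {nx nu : ℕ} (N : ℕ)
    (A : ℕ → Matrix (Fin nx) (Fin nx) ℝ) (B : ℕ → Matrix (Fin nx) (Fin nu) ℝ)
    (Q : ℕ → Matrix (Fin nx) (Fin nx) ℝ) (R : ℕ → Matrix (Fin nu) (Fin nu) ℝ)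
    (S : ℕ → Matrix (Fin nu) (Fin nx) ℝ) : Prop :=
  ∀ p q, HomFeas N A B p q →
    ¬ ((∀ k ≤ N, p k = 0) ∧ (∀ k < N, q k = 0)) →
    0 < homObj N Q R S p q


lemma mvDot {m n : ℕ} (A : Matrix (Fin m) (Fin n) ℝ) (x : Fin n → ℝ) (z : Fin m → ℝ) :
    (A *ᵥ x) ⬝ᵥ z = x ⬝ᵥ Aᵀ *ᵥ z := by
  rw [dotProduct_comm, dotProduct_mulVec, ← mulVec_transpose, dotProduct_comm]

lemma dotSwap {m n : ℕ} (P : Matrix (Fin m) (Fin n) ℝ) (a : Fin m → ℝ) (b : Fin n → ℝ) :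
    a ⬝ᵥ P *ᵥ b = b ⬝ᵥ Pᵀ *ᵥ a := by
  rw [dotProduct_comm, mvDot]

lemma quad2 {a b c : ℕ} (M : Matrix (Fin a) (Fin b) ℝ) (C : Matrix (Fin a) (Fin a) ℝ)
    (Nm : Matrix (Fin a) (Fin c) ℝ) (x : Fin b → ℝ) (y : Fin c → ℝ) :
    (M *ᵥ x) ⬝ᵥ C *ᵥ (Nm *ᵥ y) = x ⬝ᵥ (Mᵀ * C * Nm) *ᵥ y := by
  rw [mvDot, Matrix.mul_assoc, ← Matrix.mulVec_mulVec, ← Matrix.mulVec_mulVec]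

lemma step_identity {nx nu : ℕ}
    (Am : Matrix (Fin nx) (Fin nx) ℝ) (Bm : Matrix (Fin nx) (Fin nu) ℝ)
    (Qm : Matrix (Fin nx) (Fin nx) ℝ) (Rm : Matrix (Fin nu) (Fin nu) ℝ)
    (Sm : Matrix (Fin nu) (Fin nx) ℝ) (Kn : Matrix (Fin nx) (Fin nx) ℝ)
    (Wm : Matrix (Fin nu) (Fin nu) ℝ)
    (hKs : Knᵀ = Kn) (hWdef : Wm = Rm + Bmᵀ * Kn * Bm) (hWs : Wmᵀ = Wm)
    (hWinv : Wm * Wm⁻¹ = 1)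
    (x : Fin nx → ℝ) (q : Fin nu → ℝ)
    (hq : q = -(Wm⁻¹ *ᵥ ((Bmᵀ * Kn * Am + Sm) *ᵥ x))) :
    x ⬝ᵥ Qm *ᵥ x + 2 * (q ⬝ᵥ Sm *ᵥ x) + q ⬝ᵥ Rm *ᵥ q
      + (Am *ᵥ x + Bm *ᵥ q) ⬝ᵥ Kn *ᵥ (Am *ᵥ x + Bm *ᵥ q)
    = x ⬝ᵥ (Qm + Amᵀ * Kn * Am
        - (Bmᵀ * Kn * Am + Sm)ᵀ * Wm⁻¹ * (Bmᵀ * Kn * Am + Sm)) *ᵥ x := by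
  set M : Matrix (Fin nu) (Fin nx) ℝ := Bmᵀ * Kn * Am + Sm with hM
  have hWinvs : (Wm⁻¹)ᵀ = Wm⁻¹ := by
    rw [Matrix.transpose_nonsing_inv, hWs]
  -- cross term expansion
  have hcross : (Am *ᵥ x + Bm *ᵥ q) ⬝ᵥ Kn *ᵥ (Am *ᵥ x + Bm *ᵥ q)
      = x ⬝ᵥ (Amᵀ * Kn * Am) *ᵥ x + 2 * (q ⬝ᵥ (Bmᵀ * Kn * Am) *ᵥ x)
        + q ⬝ᵥ (Bmᵀ * Kn * Bm) *ᵥ q := by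
    have e1 : x ⬝ᵥ (Amᵀ * Kn * Bm) *ᵥ q = q ⬝ᵥ (Bmᵀ * Kn * Am) *ᵥ x := by
      rw [dotSwap]
      congr 1
      simp [Matrix.transpose_mul, Matrix.mul_assoc, hKs]
    simp only [Matrix.mulVec_add, dotProduct_add, add_dotProduct, quad2]
    rw [e1]; ring
  -- q ⬝ M x term
  have key : (Wm⁻¹ *ᵥ (M *ᵥ x)) ⬝ᵥ (M *ᵥ x) = x ⬝ᵥ (Mᵀ * Wm⁻¹ * M) *ᵥ x := by
    rw [mvDot, hWinvs, quad2]
  have h2 : q ⬝ᵥ M *ᵥ x = -(x ⬝ᵥ (Mᵀ * Wm⁻¹ * M) *ᵥ x) := by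
    rw [hq, neg_dotProduct, key]
  -- q ⬝ W q term
  have h3aux : ∀ y : Fin nu → ℝ,
      (-(Wm⁻¹ *ᵥ y)) ⬝ᵥ Wm *ᵥ (-(Wm⁻¹ *ᵥ y)) = (Wm⁻¹ *ᵥ y) ⬝ᵥ y := by
    intro y
    rw [Matrix.mulVec_neg, neg_dotProduct, dotProduct_neg, neg_neg,
      Matrix.mulVec_mulVec, hWinv, Matrix.one_mulVec]
  have h3 : q ⬝ᵥ Wm *ᵥ q = x ⬝ᵥ (Mᵀ * Wm⁻¹ * M) *ᵥ x := by
    rw [hq, h3aux, key]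
  have hqM : q ⬝ᵥ Sm *ᵥ x + q ⬝ᵥ (Bmᵀ * Kn * Am) *ᵥ x = q ⬝ᵥ M *ᵥ x := by
    rw [hM, Matrix.add_mulVec, dotProduct_add]; ring
  have hqW : q ⬝ᵥ Rm *ᵥ q + q ⬝ᵥ (Bmᵀ * Kn * Bm) *ᵥ q = q ⬝ᵥ Wm *ᵥ q := by
    rw [hWdef, Matrix.add_mulVec, dotProduct_add]
  have hrhs : x ⬝ᵥ (Qm + Amᵀ * Kn * Am - Mᵀ * Wm⁻¹ * M) *ᵥ x
      = x ⬝ᵥ Qm *ᵥ x + x ⬝ᵥ (Amᵀ * Kn * Am) *ᵥ x - x ⬝ᵥ (Mᵀ * Wm⁻¹ * M) *ᵥ x := by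
    rw [Matrix.sub_mulVec, Matrix.add_mulVec, dotProduct_sub, dotProduct_add]
  rw [hcross, hrhs]
  nlinarith [h2, h3, hqM, hqW]

noncomputable def fbV {nx nu : ℕ}
    (A : ℕ → Matrix (Fin nx) (Fin nx) ℝ) (B : ℕ → Matrix (Fin nx) (Fin nu) ℝ)
    (S : ℕ → Matrix (Fin nu) (Fin nx) ℝ)
    (K : ℕ → Matrix (Fin nx) (Fin nx) ℝ) (W : ℕ → Matrix (Fin nu) (Fin nu) ℝ)
    (j : ℕ) (x : Fin nx → ℝ) : Fin nu → ℝ :=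
  -((W j)⁻¹ *ᵥ (((B j)ᵀ * K (j + 1) * A j + S j) *ᵥ x))

noncomputable def ctrlV {nx nu : ℕ}
    (A : ℕ → Matrix (Fin nx) (Fin nx) ℝ) (B : ℕ → Matrix (Fin nx) (Fin nu) ℝ)
    (S : ℕ → Matrix (Fin nu) (Fin nx) ℝ)
    (K : ℕ → Matrix (Fin nx) (Fin nx) ℝ) (W : ℕ → Matrix (Fin nu) (Fin nu) ℝ)
    (k : ℕ) (v : Fin nu → ℝ) (j : ℕ) (x : Fin nx → ℝ) : Fin nu → ℝ :=
  if j < k then 0 else if j = k then v else fbV A B S K W j x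

noncomputable def trajV {nx nu : ℕ}
    (A : ℕ → Matrix (Fin nx) (Fin nx) ℝ) (B : ℕ → Matrix (Fin nx) (Fin nu) ℝ)
    (S : ℕ → Matrix (Fin nu) (Fin nx) ℝ)
    (K : ℕ → Matrix (Fin nx) (Fin nx) ℝ) (W : ℕ → Matrix (Fin nu) (Fin nu) ℝ)
    (k : ℕ) (v : Fin nu → ℝ) : ℕ → Fin nx → ℝ
  | 0 => 0
  | j + 1 => A j *ᵥ trajV A B S K W k v j
      + B j *ᵥ ctrlV A B S K W k v j (trajV A B S K W k v j)

noncomputable def costFrom {nx nu : ℕ} (N : ℕ)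
    (Q : ℕ → Matrix (Fin nx) (Fin nx) ℝ) (R : ℕ → Matrix (Fin nu) (Fin nu) ℝ)
    (S : ℕ → Matrix (Fin nu) (Fin nx) ℝ) (k : ℕ)
    (p : ℕ → Fin nx → ℝ) (q : ℕ → Fin nu → ℝ) : ℝ :=
  (∑ j ∈ Finset.Ico k N,
      (p j ⬝ᵥ Q j *ᵥ p j + 2 * (q j ⬝ᵥ S j *ᵥ p j) + q j ⬝ᵥ R j *ᵥ q j))
    + p N ⬝ᵥ Q N *ᵥ p N

lemma costFrom_split {nx nu : ℕ} (N : ℕ)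
    (Q : ℕ → Matrix (Fin nx) (Fin nx) ℝ) (R : ℕ → Matrix (Fin nu) (Fin nu) ℝ)
    (S : ℕ → Matrix (Fin nu) (Fin nx) ℝ) {a b : ℕ} (hab : a ≤ b) (hbN : b ≤ N)
    (p : ℕ → Fin nx → ℝ) (q : ℕ → Fin nu → ℝ) :
    costFrom N Q R S a p q
      = (∑ j ∈ Finset.Ico a b,
          (p j ⬝ᵥ Q j *ᵥ p j + 2 * (q j ⬝ᵥ S j *ᵥ p j) + q j ⬝ᵥ R j *ᵥ q j))
        + costFrom N Q R S b p q := by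
  unfold costFrom
  rw [← Finset.sum_Ico_consecutive _ hab hbN]
  ring

lemma ctrlV_lt {nx nu : ℕ}
    (A : ℕ → Matrix (Fin nx) (Fin nx) ℝ) (B : ℕ → Matrix (Fin nx) (Fin nu) ℝ)
    (S : ℕ → Matrix (Fin nu) (Fin nx) ℝ)
    (K : ℕ → Matrix (Fin nx) (Fin nx) ℝ) (W : ℕ → Matrix (Fin nu) (Fin nu) ℝ)
    (k : ℕ) (v : Fin nu → ℝ) {j : ℕ} (h : j < k) (x : Fin nx → ℝ) :
    ctrlV A B S K W k v j x = 0 := by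
  unfold ctrlV; rw [if_pos h]

lemma ctrlV_self {nx nu : ℕ}
    (A : ℕ → Matrix (Fin nx) (Fin nx) ℝ) (B : ℕ → Matrix (Fin nx) (Fin nu) ℝ)
    (S : ℕ → Matrix (Fin nu) (Fin nx) ℝ)
    (K : ℕ → Matrix (Fin nx) (Fin nx) ℝ) (W : ℕ → Matrix (Fin nu) (Fin nu) ℝ)
    (k : ℕ) (v : Fin nu → ℝ) (x : Fin nx → ℝ) :
    ctrlV A B S K W k v k x = v := by
  unfold ctrlV; rw [if_neg (lt_irrefl k), if_pos rfl]

lemma ctrlV_gt {nx nu : ℕ}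
    (A : ℕ → Matrix (Fin nx) (Fin nx) ℝ) (B : ℕ → Matrix (Fin nx) (Fin nu) ℝ)
    (S : ℕ → Matrix (Fin nu) (Fin nx) ℝ)
    (K : ℕ → Matrix (Fin nx) (Fin nx) ℝ) (W : ℕ → Matrix (Fin nu) (Fin nu) ℝ)
    (k : ℕ) (v : Fin nu → ℝ) {j : ℕ} (h : k < j) (x : Fin nx → ℝ) :
    ctrlV A B S K W k v j x = fbV A B S K W j x := by
  unfold ctrlV; rw [if_neg (by omega), if_neg (by omega)]

lemma homObj_eq_costFrom {nx nu : ℕ} (N : ℕ)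
    (Q : ℕ → Matrix (Fin nx) (Fin nx) ℝ) (R : ℕ → Matrix (Fin nu) (Fin nu) ℝ)
    (S : ℕ → Matrix (Fin nu) (Fin nx) ℝ)
    (p : ℕ → Fin nx → ℝ) (q : ℕ → Fin nu → ℝ) :
    homObj N Q R S p q = costFrom N Q R S 0 p q := by
  unfold homObj costFrom
  rw [Finset.range_eq_Ico]

/-- **Positive definiteness of the Riccati innovation matrices (Lemma 3.4(i)).**
Under SOSC, every `W_k = R_k + B_kᵀK_{k+1}B_k` is symmetric positive definite. -/
theorem riccati_W_posdef
    (N nx nu : ℕ) (hN : 1 ≤ N) (hnx : 1 ≤ nx) (hnu : 1 ≤ nu)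
    (A : ℕ → Matrix (Fin nx) (Fin nx) ℝ) (B : ℕ → Matrix (Fin nx) (Fin nu) ℝ)
    (Q : ℕ → Matrix (Fin nx) (Fin nx) ℝ) (R : ℕ → Matrix (Fin nu) (Fin nu) ℝ)
    (S : ℕ → Matrix (Fin nu) (Fin nx) ℝ)
    (hQsymm : ∀ k ≤ N, (Q k).IsSymm) (hRsymm : ∀ k < N, (R k).IsSymm)
    (hsosc : SOSC N A B Q R S)
    (K : ℕ → Matrix (Fin nx) (Fin nx) ℝ) (W : ℕ → Matrix (Fin nu) (Fin nu) ℝ)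
    (hKN : K N = Q N)
    (hW : ∀ k < N, W k = R k + (B k)ᵀ * K (k + 1) * B k)
    (hK : ∀ k < N, K k =
      Q k + (A k)ᵀ * K (k + 1) * A k
        - ((B k)ᵀ * K (k + 1) * A k + S k)ᵀ * (W k)⁻¹ * ((B k)ᵀ * K (k + 1) * A k + S k)) :
    ∀ k < N, (W k).IsSymm ∧ (W k).PosDef := by
  have main : ∀ d k, k + d = N →
      ((K k)ᵀ = K k ∧
       (∀ j, k ≤ j → j < N → (W j).IsSymm ∧ (W j).PosDef) ∧
       (∀ p q, (∀ j, k ≤ j → j < N →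
            q j = fbV A B S K W j (p j) ∧ p (j + 1) = A j *ᵥ p j + B j *ᵥ q j) →
          costFrom N Q R S k p q = p k ⬝ᵥ K k *ᵥ p k)) := by
    intro d
    induction d with
    | zero =>
      intro k hk
      have hkN : k = N := by omega
      refine ⟨?_, ?_, ?_⟩
      · rw [hkN, hKN]; exact hQsymm N le_rfl
      · intro j hj1 hj2; omega
      · intro p q _
        rw [hkN]
        simp [costFrom, hKN]
    | succ d ih =>
      intro k hk
      have hkN : k < N := by omega
      obtain ⟨ihK, ihW, ihCTG⟩ := ih (k + 1) (by omega)
      -- symmetry of W k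
      have hWks : (W k)ᵀ = W k := by
        rw [hW k hkN]
        simp [Matrix.transpose_add, Matrix.transpose_mul, Matrix.mul_assoc, ihK,
          (hRsymm k hkN).eq]
      -- positive definiteness of W k
      have hWkpd : (W k).PosDef := by
        refine Matrix.PosDef.of_dotProduct_mulVec_pos ?_ ?_
        · unfold Matrix.IsHermitian
          rw [conjTranspose_eq_transpose_of_trivial]
          exact hWks
        · intro v hv
          set p : ℕ → Fin nx → ℝ := trajV A B S K W k v with hpdef
          set qf : ℕ → Fin nu → ℝ := fun j => ctrlV A B S K W k v j (p j) with hqdef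
          have hp0 : ∀ j, j ≤ k → p j = 0 := by
            intro j
            induction j with
            | zero => intro _; simp [hpdef, trajV]
            | succ n ihn =>
              intro h
              have h1 : p n = 0 := ihn (by omega)
              have h2 : n < k := by omega
              show trajV A B S K W k v (n + 1) = 0
              rw [trajV]
              rw [show trajV A B S K W k v n = p n from rfl, h1,
                ctrlV_lt A B S K W k v h2]
              simp
          have hfeas : HomFeas N A B p qf := by
            refine ⟨by simp [hpdef, trajV], fun j hj => rfl⟩
          have hnz : ¬ ((∀ j ≤ N, p j = 0) ∧ (∀ j < N, qf j = 0)) := by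
            rintro ⟨_, hq0⟩
            have := hq0 k hkN
            rw [hqdef] at this
            simp only at this
            rw [ctrlV_self] at this
            exact hv this
          have hpos := hsosc p qf hfeas hnz
          -- compute the objective
          have hobj0 : homObj N Q R S p qf = costFrom N Q R S 0 p qf :=
            homObj_eq_costFrom N Q R S p qf
          have hsplit := costFrom_split N Q R S (Nat.zero_le k) (le_of_lt hkN) p qf
          have hzero : (∑ j ∈ Finset.Ico 0 k,
              (p j ⬝ᵥ Q j *ᵥ p j + 2 * (qf j ⬝ᵥ S j *ᵥ p j) + qf j ⬝ᵥ R j *ᵥ qf j)) = 0 := by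
            refine Finset.sum_eq_zero fun j hj => ?_
            have hjk : j < k := (Finset.mem_Ico.mp hj).2
            have hpj : p j = 0 := hp0 j (le_of_lt hjk)
            have hqj : qf j = 0 := by
              rw [hqdef]; simp only; rw [ctrlV_lt A B S K W k v hjk]
            simp [hpj, hqj]
          have hsplit2 := costFrom_split N Q R S (Nat.le_succ k) hkN p qf
          have hIcok : Finset.Ico k (k + 1) = {k} := by
            rw [Finset.Ico_add_one_right_eq_Icc, Finset.Icc_self]
          have hpk : p k = 0 := hp0 k le_rfl
          have hqk : qf k = v := by rw [hqdef]; simp only; rw [ctrlV_self]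
          have hstagek : (∑ j ∈ Finset.Ico k (k + 1),
              (p j ⬝ᵥ Q j *ᵥ p j + 2 * (qf j ⬝ᵥ S j *ᵥ p j) + qf j ⬝ᵥ R j *ᵥ qf j))
              = v ⬝ᵥ R k *ᵥ v := by
            rw [hIcok, Finset.sum_singleton, hpk, hqk]
            simp
          have htailfeed : ∀ j, k + 1 ≤ j → j < N →
              qf j = fbV A B S K W j (p j) ∧ p (j + 1) = A j *ᵥ p j + B j *ᵥ qf j := by
            intro j hj1 hj2
            constructor
            · rw [hqdef]
              simp only
              rw [ctrlV_gt A B S K W k v (by omega : k < j)]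
            · rfl
          have htail := ihCTG p qf htailfeed
          have hpk1 : p (k + 1) = B k *ᵥ v := by
            show trajV A B S K W k v (k + 1) = B k *ᵥ v
            rw [trajV]
            rw [show trajV A B S K W k v k = p k from rfl, hpk, ctrlV_self]
            simp
          have hWval : v ⬝ᵥ R k *ᵥ v + p (k + 1) ⬝ᵥ K (k + 1) *ᵥ p (k + 1)
              = v ⬝ᵥ W k *ᵥ v := by
            rw [hpk1, quad2, hW k hkN, Matrix.add_mulVec, dotProduct_add]
          have hobj : homObj N Q R S p qf = v ⬝ᵥ W k *ᵥ v := by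
            rw [hobj0, hsplit, hzero, zero_add, hsplit2, hstagek, htail, hWval]
          rw [hobj] at hpos
          simpa using hpos
      have hdet : IsUnit (W k).det := isUnit_iff_ne_zero.mpr (ne_of_gt hWkpd.det_pos)
      have hWinv : W k * (W k)⁻¹ = 1 := Matrix.mul_nonsing_inv (W k) hdet
      have hWinvs : ((W k)⁻¹)ᵀ = (W k)⁻¹ := by
        rw [Matrix.transpose_nonsing_inv, hWks]
      -- symmetry of K k
      have hKks : (K k)ᵀ = K k := by
        rw [hK k hkN]
        simp [Matrix.transpose_sub, Matrix.transpose_add, Matrix.transpose_mul,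
          Matrix.transpose_transpose, ihK, hWinvs, Matrix.mul_assoc,
          (hQsymm k (le_of_lt hkN)).eq]
      refine ⟨hKks, ?_, ?_⟩
      · intro j hj1 hj2
        rcases Nat.eq_or_lt_of_le hj1 with h | h
        · exact h ▸ ⟨hWks, hWkpd⟩
        · exact ihW j h hj2
      · intro p q hpq
        obtain ⟨hqk, hpk1⟩ := hpq k le_rfl hkN
        have htail := ihCTG p q (fun j hj1 hj2 => hpq j (by omega) hj2)
        have hsplit : costFrom N Q R S k p q
            = (p k ⬝ᵥ Q k *ᵥ p k + 2 * (q k ⬝ᵥ S k *ᵥ p k) + q k ⬝ᵥ R k *ᵥ q k)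
              + costFrom N Q R S (k + 1) p q := by
          rw [costFrom_split N Q R S (b := k + 1) (Nat.le_succ k) hkN p q,
            Finset.Ico_add_one_right_eq_Icc, Finset.Icc_self, Finset.sum_singleton]
        rw [hsplit, htail, hpk1]
        have hstep := step_identity (A k) (B k) (Q k) (R k) (S k) (K (k + 1)) (W k)
          ihK (hW k hkN) hWks hWinv (p k) (q k) (by rw [hqk]; rfl)
        rw [hstep, ← hK k hkN]
  intro k hk
  obtain ⟨_, hWall, _⟩ := main (N - k) k (by omega)
  exact hWall k le_rfl hk
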